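/- Assume either z_i z_j < 0 for some i, j, or (z_j < 0 for all j and q_0 > 0), let φ* be the unique zero of f, and set F_e = F(φ*). Fix σ > 0. For each L > 0, let φ_L be the unique twice continuously differentiable solution of φ″ + f(φ) = 0 on [−L/2, L/2] with φ_L′(−L/2) = −σ and φ_L′(L/2) = σ; since f < 0 along the solution, φ_L′ is strictly increasing, so there is a unique δ_N(L) ∈ (0, L) with φ_L′(−L/2 + δ_N(L)) = −σ/2. Let a, b be the unique reals in (φ*, ∞) with F(a) = F_e − σ²/8 and F(b) = F_e − σ²/2. Then the integral δ_N^∞ = (1/√2) ∫_a^b (F_e − F(φ))^{−1/2} dφ is finite and δ_N(L) → δ_N^∞ as L → ∞ (formation of a Gouy–Chapman layer in the presence of an equilibrium). -/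

import Mathlib

set_option maxHeartbeats 2000000

open Real Filter Set Topology MeasureTheory

/-- A (C²) solution of the PB equation `φ'' + f(φ) = 0` on `[a, b]`, written as the
first-order planar system `φ' = u`, `u' = -f(φ)`. -/
def IsPBSol (f : ℝ → ℝ) (a b : ℝ) (φ u : ℝ → ℝ) : Prop :=
  ∀ x ∈ Set.Icc a b,
    HasDerivWithinAt φ (u x) (Set.Icc a b) x ∧
    HasDerivWithinAt u (-(f (φ x))) (Set.Icc a b) x

section auxl


variable {N : ℕ} {z c : Fin N → ℝ} {q0 : ℝ} {f F : ℝ → ℝ}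

lemma aux_hasDerivAt_F (hf : ∀ φ : ℝ, f φ = q0 + ∑ j, z j * c j * Real.exp (-(z j) * φ))
    (hF : ∀ φ : ℝ, F φ = q0 * φ - ∑ j, c j * Real.exp (-(z j) * φ)) (x : ℝ) :
    HasDerivAt F (f x) x := by
  have h1 : HasDerivAt (fun y : ℝ => q0 * y) q0 x := by
    simpa using (hasDerivAt_id x).const_mul q0
  have h2 : ∀ j : Fin N, HasDerivAt (fun y : ℝ => c j * Real.exp (-(z j) * y))
      (c j * (Real.exp (-(z j) * x) * (-(z j)))) x := by
    intro j
    have hin : HasDerivAt (fun y : ℝ => -(z j) * y) (-(z j)) x := by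
      simpa using (hasDerivAt_id x).const_mul (-(z j))
    exact (hin.exp).const_mul (c j)
  have hsum : HasDerivAt (fun y : ℝ => ∑ j : Fin N, c j * Real.exp (-(z j) * y))
      (∑ j : Fin N, c j * (Real.exp (-(z j) * x) * (-(z j)))) x :=
    HasDerivAt.fun_sum (fun j _ => h2 j)
  have h3 := h1.sub hsum
  have hFe : F = fun y : ℝ => q0 * y - ∑ j, c j * Real.exp (-(z j) * y) := funext hF
  have hval : q0 - ∑ j : Fin N, c j * (Real.exp (-(z j) * x) * (-(z j))) = f x := by
    rw [hf x]
    have : ∑ j : Fin N, c j * (Real.exp (-(z j) * x) * (-(z j)))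
        = -∑ j : Fin N, z j * c j * Real.exp (-(z j) * x) := by
      rw [← Finset.sum_neg_distrib]
      exact Finset.sum_congr rfl (fun j _ => by ring)
    rw [this]; ring
  rw [hFe, ← hval]
  exact h3

lemma aux_hasDerivAt_f (hf : ∀ φ : ℝ, f φ = q0 + ∑ j, z j * c j * Real.exp (-(z j) * φ)) (x : ℝ) :
    HasDerivAt f (-∑ j : Fin N, z j ^ 2 * c j * Real.exp (-(z j) * x)) x := by
  have h2 : ∀ j : Fin N, HasDerivAt (fun y : ℝ => z j * c j * Real.exp (-(z j) * y))
      (z j * c j * (Real.exp (-(z j) * x) * (-(z j)))) x := by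
    intro j
    have hin : HasDerivAt (fun y : ℝ => -(z j) * y) (-(z j)) x := by
      simpa using (hasDerivAt_id x).const_mul (-(z j))
    exact (hin.exp).const_mul (z j * c j)
  have hsum : HasDerivAt (fun y : ℝ => ∑ j : Fin N, z j * c j * Real.exp (-(z j) * y))
      (∑ j : Fin N, z j * c j * (Real.exp (-(z j) * x) * (-(z j)))) x :=
    HasDerivAt.fun_sum (fun j _ => h2 j)
  have h3 := hsum.const_add q0
  have hfe : f = fun y : ℝ => q0 + ∑ j, z j * c j * Real.exp (-(z j) * y) := funext hf
  have hval : ∑ j : Fin N, z j * c j * (Real.exp (-(z j) * x) * (-(z j)))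
      = -∑ j : Fin N, z j ^ 2 * c j * Real.exp (-(z j) * x) := by
    rw [← Finset.sum_neg_distrib]
    exact Finset.sum_congr rfl (fun j _ => by ring)
  rw [hfe, ← hval]
  exact h3

lemma aux_f_strictAnti (hN : 1 ≤ N) (hz : ∀ j, z j ≠ 0) (hc : ∀ j, 0 < c j)
    (hf : ∀ φ : ℝ, f φ = q0 + ∑ j, z j * c j * Real.exp (-(z j) * φ)) :
    StrictAnti f := by
  apply strictAnti_of_deriv_neg
  intro x
  rw [(aux_hasDerivAt_f hf x).deriv]
  have : 0 < ∑ j : Fin N, z j ^ 2 * c j * Real.exp (-(z j) * x) := by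
    apply Finset.sum_pos
    · intro j _
      have := hc j
      have hzj := hz j
      positivity
    · have : Nonempty (Fin N) := Fin.pos_iff_nonempty.mp (by omega)
      exact Finset.univ_nonempty
  linarith


end auxl


lemma aux_invsqrt_lip {m s t : ℝ} (hm : 0 < m) (hs : m ≤ s) (ht : m ≤ t) :
    |(Real.sqrt (2*s))⁻¹ - (Real.sqrt (2*t))⁻¹| ≤ |s - t| / (2*m*Real.sqrt (2*m)) := by
  set r := Real.sqrt (2*m) with hrdef
  set A := Real.sqrt (2*s) with hAdef
  set B := Real.sqrt (2*t) with hBdef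
  have hr : 0 < r := Real.sqrt_pos.mpr (by linarith)
  have hA : r ≤ A := Real.sqrt_le_sqrt (by linarith)
  have hB : r ≤ B := Real.sqrt_le_sqrt (by linarith)
  have hA0 : 0 < A := lt_of_lt_of_le hr hA
  have hB0 : 0 < B := lt_of_lt_of_le hr hB
  have hA2 : A^2 = 2*s := Real.sq_sqrt (by linarith)
  have hB2 : B^2 = 2*t := Real.sq_sqrt (by linarith)
  have hr2 : r^2 = 2*m := Real.sq_sqrt (by linarith)
  have key : A⁻¹ - B⁻¹ = (B - A) / (A*B) := by
    field_simp
  have key2 : |B - A| = (2*|s - t|) / (A + B) := by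
    rw [eq_div_iff (show A + B ≠ 0 by linarith)]
    have h1 : |B - A| * (A + B) = |(B - A) * (A + B)| := by
      rw [abs_mul, abs_of_pos (show (0:ℝ) < A + B by linarith)]
    rw [h1, show (B - A) * (A + B) = B^2 - A^2 by ring, hA2, hB2,
      show 2*t - 2*s = 2*(t - s) by ring, abs_mul, abs_two, abs_sub_comm]
  have hABpos : 0 < A * B := by positivity
  calc |A⁻¹ - B⁻¹| = (2*|s - t|) / ((A + B) * (A*B)) := by
        rw [key, abs_div, abs_of_pos hABpos, key2, div_div]
    _ ≤ (2*|s - t|) / ((2*r) * (2*m)) := by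
        apply div_le_div_of_nonneg_left (by positivity) (by positivity)
        have h1 : 2*r ≤ A + B := by linarith
        have h2 : 2*m ≤ A*B := by nlinarith
        have : 0 < 2*r := by positivity
        nlinarith
    _ = |s - t| / (2*m*r) := by
        rw [div_eq_div_iff (by positivity) (by positivity)]; ring

section aux2

variable {f F : ℝ → ℝ} {φstar : ℝ}

lemma aux_F_strictAntiOn (hDF : ∀ x, HasDerivAt F (f x) x) (hfa : StrictAnti f)
    (hstar : f φstar = 0) : StrictAntiOn F (Ici φstar) := by
  apply strictAntiOn_of_deriv_neg (convex_Ici _)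
    (fun x _ => (hDF x).continuousAt.continuousWithinAt)
  intro x hx
  rw [interior_Ici] at hx
  rw [(hDF x).deriv]
  have := hfa (hx : φstar < x)
  linarith

lemma aux_F_lt (hDF : ∀ x, HasDerivAt F (f x) x) (hfa : StrictAnti f)
    (hstar : f φstar = 0) : ∀ x, x ≠ φstar → F x < F φstar := by
  intro x hx
  rcases lt_or_gt_of_ne hx with h | h
  · have hmono : StrictMonoOn F (Iic φstar) := by
      apply strictMonoOn_of_deriv_pos (convex_Iic _)
        (fun y _ => (hDF y).continuousAt.continuousWithinAt)
      intro y hy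
      rw [interior_Iic] at hy
      rw [(hDF y).deriv]
      have := hfa (hy : y < φstar)
      linarith
    exact hmono (mem_Iic.mpr h.le) (mem_Iic.mpr le_rfl) h
  · exact aux_F_strictAntiOn hDF hfa hstar (mem_Ici.mpr le_rfl) (mem_Ici.mpr h.le) h

lemma aux_F_le (hDF : ∀ x, HasDerivAt F (f x) x) (hfa : StrictAnti f)
    (hstar : f φstar = 0) : ∀ x, F x ≤ F φstar := by
  intro x
  rcases eq_or_ne x φstar with rfl | h
  · exact le_refl _
  · exact (aux_F_lt hDF hfa hstar x h).le

lemma aux_F_anti_rev (hDF : ∀ x, HasDerivAt F (f x) x) (hfa : StrictAnti f)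
    (hstar : f φstar = 0) {p q : ℝ} (hp : φstar ≤ p) (hq : φstar ≤ q)
    (h : F p ≤ F q) : q ≤ p := by
  by_contra hpq
  push_neg at hpq
  exact absurd (aux_F_strictAntiOn hDF hfa hstar hp (hp.trans hpq.le) hpq) (not_lt.mpr h)

lemma aux_perL {f' : ℝ → ℝ} {σ : ℝ}
    (hDF : ∀ x, HasDerivAt F (f x) x) (hDf : ∀ x, HasDerivAt f (f' x) x)
    (hf'c : Continuous f') (hfa : StrictAnti f) (hstar : f φstar = 0) (hσ : 0 < σ)
    {L : ℝ} (hL : 0 < L) {φ u : ℝ → ℝ}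
    (hsol : ∀ x ∈ Set.Icc (-(L/2)) (L/2),
      HasDerivWithinAt φ (u x) (Set.Icc (-(L/2)) (L/2)) x ∧
      HasDerivWithinAt u (-(f (φ x))) (Set.Icc (-(L/2)) (L/2)) x)
    (hua : u (-(L/2)) = -σ) (hub : u (L/2) = σ)
    {d : ℝ} (hd : d ∈ Set.Ioo 0 L) (hud : u (-(L/2) + d) = -σ/2) :
    ∃ E p q : ℝ, φstar < p ∧ φstar < q ∧ p ≤ q ∧ F p = E - σ^2/8 ∧ F q = E - σ^2/2 ∧
      E ≤ F φstar ∧ (∀ y, φstar < y → E ≤ F y → L * (-(f y)) ≤ 2*σ) ∧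
      d = ∫ x in p..q, (Real.sqrt (2*(E - F x)))⁻¹ := by
  set A := -(L/2) with hAdef
  set B := L/2 with hBdef
  have hAB : A < B := by simp only [hAdef, hBdef]; linarith
  set I := Set.Icc A B with hIdef
  have hAI : A ∈ I := ⟨le_refl _, hAB.le⟩
  have hBI : B ∈ I := ⟨hAB.le, le_refl _⟩
  have hφ : ∀ x ∈ I, HasDerivWithinAt φ (u x) I x := fun x hx => (hsol x hx).1
  have hu' : ∀ x ∈ I, HasDerivWithinAt u (-(f (φ x))) I x := fun x hx => (hsol x hx).2
  have hφc : ContinuousOn φ I := fun x hx => (hφ x hx).continuousWithinAt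
  have huc : ContinuousOn u I := fun x hx => (hu' x hx).continuousWithinAt
  -- energy conservation
  set E := σ^2/2 + F (φ A) with hEdef
  have hW : ∀ x ∈ I, HasDerivWithinAt (fun y => u y^2/2 + F (φ y)) 0 I x := by
    intro x hx
    have h1 : HasDerivWithinAt (fun y => u y ^ 2 / 2)
        (((2:ℕ) * u x ^ (2-1) * (-(f (φ x))))/2) I x := ((hu' x hx).pow 2).div_const 2
    have h2 : HasDerivWithinAt (fun y => F (φ y)) (f (φ x) * u x) I x :=
      (hDF (φ x)).comp_hasDerivWithinAt x (hφ x hx)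
    have h3 := h1.add h2
    refine h3.congr_deriv ?_
    push_cast
    ring
  have henergy : ∀ x ∈ I, u x^2/2 + F (φ x) = E := by
    have hcont : ContinuousOn (fun y => u y^2/2 + F (φ y)) I :=
      fun x hx => (hW x hx).continuousWithinAt
    have hkey := constant_of_has_deriv_right_zero hcont (fun x hx =>
      (hW x (Set.Ico_subset_Icc_self hx)).mono_of_mem_nhdsWithin (Icc_mem_nhdsGE_of_mem hx))
    intro x hx
    have := hkey x hx
    rw [this, hua, hEdef]
    ring
  -- a zero of u exists, hence E ≤ F φstar
  obtain ⟨xs, hxsI, huxs⟩ : ∃ xs ∈ I, u xs = 0 := by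
    have h0 : (0:ℝ) ∈ Set.Icc (u A) (u B) := by rw [hua, hub]; constructor <;> linarith
    obtain ⟨xs, hxs, h⟩ := intermediate_value_Icc hAB.le huc h0
    exact ⟨xs, hxs, h⟩
  have hEle : E ≤ F φstar := by
    have he := henergy xs hxsI
    rw [huxs] at he
    norm_num at he
    have := aux_F_le hDF hfa hstar (φ xs)
    linarith
  clear_value E
  -- the orbit avoids the equilibrium point (φstar, 0)
  have hKcpt : IsCompact (φ '' I) := isCompact_Icc.image_of_continuousOn hφc
  set m := min φstar (sInf (φ '' I)) with hmdef
  set M := max φstar (sSup (φ '' I)) with hMdef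
  have hmem : ∀ x ∈ I, φ x ∈ Set.Icc m M := by
    intro x hx
    constructor
    · exact le_trans (min_le_right _ _) (csInf_le hKcpt.bddBelow ⟨x, hx, rfl⟩)
    · exact le_trans (le_csSup hKcpt.bddAbove ⟨x, hx, rfl⟩) (le_max_right _ _)
  have hφstarmem : φstar ∈ Set.Icc m M := ⟨min_le_left _ _, le_max_left _ _⟩
  obtain ⟨C, hC⟩ := isCompact_Icc.exists_bound_of_continuousOn
    (hf'c.continuousOn : ContinuousOn f' (Set.Icc m M))
  set C' := max C 0 with hC'def
  have hC'0 : 0 ≤ C' := le_max_right _ _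
  have hC'b : ∀ y ∈ Set.Icc m M, |f' y| ≤ C' := fun y hy =>
    le_trans (hC y hy) (le_max_left _ _)
  have hlip : ∀ x ∈ I, |f (φ x)| ≤ C' * |φ x - φstar| := by
    intro x hx
    have := Convex.norm_image_sub_le_of_norm_hasDerivWithin_le
      (f := f) (f' := f') (s := Set.Icc m M)
      (fun y _ => (hDf y).hasDerivWithinAt) (fun y hy => hC'b y hy)
      (convex_Icc m M) hφstarmem (hmem x hx)
    simpa [hstar, Real.norm_eq_abs] using this
  set c1 := 1 + C' with hc1def
  have hc1 : 0 < c1 := by positivity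
  set g := fun x => (φ x - φstar)^2 + u x^2 with hgdef
  have hg' : ∀ x ∈ I, HasDerivWithinAt g
      (2*(φ x - φstar)*(u x) + 2*(u x)*(-(f (φ x)))) I x := by
    intro x hx
    have h1 : HasDerivWithinAt (fun y => (φ y - φstar)^2)
        ((2:ℕ)*(φ x - φstar)^(2-1)*(u x)) I x := ((hφ x hx).sub_const φstar).pow 2
    have h2 : HasDerivWithinAt (fun y => u y ^ 2)
        ((2:ℕ) * u x ^ (2-1) * (-(f (φ x)))) I x := (hu' x hx).pow 2
    have h3 := h1.add h2
    refine h3.congr_deriv ?_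
    push_cast
    ring
  have hgbound : ∀ x ∈ I, 2*(φ x - φstar)*(u x) + 2*(u x)*(-(f (φ x))) ≤ c1 * g x := by
    intro x hx
    have h1 := hlip x hx
    have e1 : 2*(φ x - φstar)*(u x) ≤ (φ x - φstar)^2 + (u x)^2 := by
      nlinarith [sq_nonneg ((φ x - φstar) - u x)]
    have s1 : 2*(u x)*(-(f (φ x))) ≤ 2*abs (u x)*abs (f (φ x)) := by
      calc 2*(u x)*(-(f (φ x))) ≤ abs (2*(u x)*(-(f (φ x)))) := le_abs_self _
        _ = 2*abs (u x)*abs (f (φ x)) := by rw [abs_mul, abs_mul, abs_two, abs_neg]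
    have s2 : 2*abs (u x)*abs (f (φ x)) ≤ 2*abs (u x)*(C'*abs (φ x - φstar)) :=
      mul_le_mul_of_nonneg_left h1 (by positivity)
    have s3 : 2*abs (φ x - φstar)*abs (u x) ≤ (φ x - φstar)^2 + (u x)^2 := by
      nlinarith [sq_nonneg (abs (φ x - φstar) - abs (u x)), sq_abs (φ x - φstar), sq_abs (u x)]
    have s4 : 2*abs (u x)*(C'*abs (φ x - φstar)) = C'*(2*abs (φ x - φstar)*abs (u x)) := by ring
    have s5 : C'*(2*abs (φ x - φstar)*abs (u x)) ≤ C'*((φ x - φstar)^2 + (u x)^2) :=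
      mul_le_mul_of_nonneg_left s3 hC'0
    have hgx : c1 * g x = ((φ x - φstar)^2 + (u x)^2) + C'*((φ x - φstar)^2 + (u x)^2) := by
      simp only [hgdef, hc1def]
      ring
    rw [hgx]
    linarith [e1, s1, s2, s4, s5]
  have hgpos : ∀ x ∈ I, 0 < g x := by
    by_contra hcon
    push_neg at hcon
    obtain ⟨x0, hx0I, hgx0⟩ := hcon
    have hgx00 : g x0 = 0 := le_antisymm hgx0 (by positivity)
    set h := fun x => g x * Real.exp (-c1 * x) with hhdef
    have hder : ∀ x ∈ Set.Ioo A B, HasDerivAt h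
        ((2*(φ x - φstar)*(u x) + 2*(u x)*(-(f (φ x)))) * Real.exp (-c1*x)
          + g x * (Real.exp (-c1*x) * (-c1))) x := by
      intro x hx
      have hgat : HasDerivAt g (2*(φ x - φstar)*(u x) + 2*(u x)*(-(f (φ x)))) x :=
        (hg' x (Set.Ioo_subset_Icc_self hx)).hasDerivAt (Icc_mem_nhds hx.1 hx.2)
      have hexp : HasDerivAt (fun y => Real.exp (-c1 * y)) (Real.exp (-c1*x) * (-c1)) x := by
        have : HasDerivAt (fun y : ℝ => -c1 * y) (-c1) x := by
          simpa using (hasDerivAt_id x).const_mul (-c1)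
        exact this.exp
      exact hgat.mul hexp
    have hanti : AntitoneOn h I := by
      apply antitoneOn_of_deriv_nonpos (convex_Icc A B)
      · exact fun x hx => ((hg' x hx).continuousWithinAt.mul
          ((Real.continuous_exp.comp (continuous_const.mul continuous_id)).continuousWithinAt))
      · intro x hx
        rw [interior_Icc] at hx
        exact (hder x hx).differentiableAt.differentiableWithinAt
      · intro x hx
        rw [interior_Icc] at hx
        rw [(hder x hx).deriv]
        have hb := hgbound x (Set.Ioo_subset_Icc_self hx)
        have hexppos : 0 < Real.exp (-c1*x) := Real.exp_pos _
        nlinarith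
    have hB' : h B ≤ h x0 := hanti hx0I hBI hx0I.2
    have hgB : σ^2 ≤ g B := by
      show σ^2 ≤ (φ B - φstar)^2 + u B^2
      rw [hub]
      nlinarith [sq_nonneg (φ B - φstar)]
    have hhB : 0 < h B := by
      have hgBpos : 0 < g B := lt_of_lt_of_le (by positivity) hgB
      exact mul_pos hgBpos (Real.exp_pos _)
    have hhx0 : h x0 = 0 := by
      show g x0 * _ = 0
      rw [hgx00, zero_mul]
    linarith
  -- φ never hits φstar
  have hne : ∀ x ∈ I, φ x ≠ φstar := by
    intro x hx heq
    have he := henergy x hx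
    rw [heq] at he
    have he2 : u x ^ 2 / 2 + F φstar ≤ F φstar := he.le.trans hEle
    have hu2 : u x ^ 2 ≤ 0 := by linarith [he2]
    have hu0 : u x = 0 := by nlinarith [sq_nonneg (u x)]
    have := hgpos x hx
    simp only [hgdef] at this
    rw [heq, hu0] at this
    simp at this
  -- φ > φstar on I
  have hgt : ∀ x ∈ I, φstar < φ x := by
    have hex : ∃ x1 ∈ I, φstar < φ x1 := by
      by_contra hcon
      push_neg at hcon
      have hlt : ∀ x ∈ I, φ x < φstar := fun x hx =>
        lt_of_le_of_ne (hcon x hx) (hne x hx)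
      have hanti : AntitoneOn u I := by
        apply antitoneOn_of_deriv_nonpos (convex_Icc A B) huc
        · intro x hx
          rw [interior_Icc] at hx
          exact ((hu' x (Set.Ioo_subset_Icc_self hx)).hasDerivAt
            (Icc_mem_nhds hx.1 hx.2)).differentiableAt.differentiableWithinAt
        · intro x hx
          rw [interior_Icc] at hx
          rw [((hu' x (Set.Ioo_subset_Icc_self hx)).hasDerivAt
            (Icc_mem_nhds hx.1 hx.2)).deriv]
          have := hfa (hlt x (Set.Ioo_subset_Icc_self hx))
          rw [hstar] at this
          linarith
      have := hanti hAI hBI hAB.le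
      rw [hua, hub] at this
      linarith
    obtain ⟨x1, hx1I, hx1⟩ := hex
    intro x hx
    rcases lt_or_ge φstar (φ x) with h | h
    · exact h
    · exfalso
      have hxlt : φ x < φstar := lt_of_le_of_ne h (hne x hx)
      have hsub : Set.uIcc x x1 ⊆ I := by
        have h1 : x ∈ Set.uIcc A B := by rw [Set.uIcc_of_le hAB.le]; exact hx
        have h2 : x1 ∈ Set.uIcc A B := by rw [Set.uIcc_of_le hAB.le]; exact hx1I
        have h3 := Set.uIcc_subset_uIcc h1 h2
        rwa [Set.uIcc_of_le hAB.le] at h3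
      have hmem' : φstar ∈ Set.uIcc (φ x) (φ x1) := by
        rw [Set.uIcc_of_le (by linarith)]
        exact ⟨hxlt.le, hx1.le⟩
      obtain ⟨x2, hx2, hx2eq⟩ := intermediate_value_uIcc (hφc.mono hsub) hmem'
      exact hne x2 (hsub hx2) hx2eq
  -- u strictly monotone on I
  have humono : StrictMonoOn u I := by
    apply strictMonoOn_of_deriv_pos (convex_Icc A B) huc
    intro x hx
    rw [interior_Icc] at hx
    rw [((hu' x (Set.Ioo_subset_Icc_self hx)).hasDerivAt (Icc_mem_nhds hx.1 hx.2)).deriv]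
    have := hfa (hgt x (Set.Ioo_subset_Icc_self hx))
    rw [hstar] at this
    linarith
  set xδ := A + d with hxδdef
  have huxδ : u xδ = -σ/2 := hud
  have hAxδ : A ≤ xδ := by simp only [hxδdef]; linarith [hd.1]
  have hxδI : xδ ∈ I := by
    refine ⟨hAxδ, ?_⟩
    simp only [hxδdef, hAdef, hBdef]
    have := hd.2
    linarith
  have hJsub : Set.Icc A xδ ⊆ I := Set.Icc_subset_Icc_right hxδI.2
  have hJu : ∀ x ∈ Set.Icc A xδ, u x ≤ -σ/2 := by
    intro x hx
    rcases eq_or_lt_of_le hx.2 with h | h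
    · rw [h, huxδ]
    · have := humono (hJsub hx) hxδI h
      rw [huxδ] at this
      linarith
  set p := φ xδ with hpdef
  set q := φ A with hqdef
  have hFq : F q = E - σ^2/2 := by
    have h1 := henergy A hAI
    rw [hua] at h1
    have h2 : (-σ)^2 = σ^2 := by ring
    rw [h2] at h1
    linarith
  have hFp : F p = E - σ^2/8 := by
    have h1 := henergy xδ hxδI
    rw [huxδ] at h1
    have h2 : (-σ/2)^2 = σ^2/4 := by ring
    rw [h2] at h1
    linarith
  have hp : φstar < p := hgt xδ hxδI
  have hq : φstar < q := hgt A hAI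
  have hσ2 : 0 < σ^2 := by positivity
  have hpq : p ≤ q := by
    apply aux_F_anti_rev hDF hfa hstar hq.le hp.le
    rw [hFp, hFq]
    linarith
  -- largeness fact
  have hlarge : ∀ y, φstar < y → E ≤ F y → L * (-(f y)) ≤ 2*σ := by
    intro y hy hEy
    have hkey : ∀ x ∈ I, f (φ x) ≤ f y := by
      intro x hx
      have he := henergy x hx
      have h1 : F (φ x) ≤ F y := by nlinarith [sq_nonneg (u x)]
      have h2 : y ≤ φ x := aux_F_anti_rev hDF hfa hstar (hgt x hx).le hy.le h1
      exact hfa.antitone h2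
    have hder : ∀ x ∈ Set.Ioo A B, HasDerivAt (fun x => u x + f y * x) (-(f (φ x)) + f y) x := by
      intro x hx
      have h1 := (hu' x (Set.Ioo_subset_Icc_self hx)).hasDerivAt (Icc_mem_nhds hx.1 hx.2)
      have h2 : HasDerivAt (fun x : ℝ => f y * x) (f y) x := by
        simpa using (hasDerivAt_id x).const_mul (f y)
      exact h1.add h2
    have hmono : MonotoneOn (fun x => u x + f y * x) I := by
      apply monotoneOn_of_deriv_nonneg (convex_Icc A B)
      · exact huc.add (continuous_const.mul continuous_id).continuousOn
      · intro x hx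
        rw [interior_Icc] at hx
        exact (hder x hx).differentiableAt.differentiableWithinAt
      · intro x hx
        rw [interior_Icc] at hx
        rw [(hder x hx).deriv]
        have := hkey x (Set.Ioo_subset_Icc_self hx)
        linarith
    have hm := hmono hAI hBI hAB.le
    simp only at hm
    rw [hua, hub] at hm
    have hprod : L * (-(f y)) = f y * A - f y * B := by
      simp only [hAdef, hBdef]
      ring
    linarith
  -- change of variables: d = ∫ p..q
  have hFdiff : Differentiable ℝ F := fun x => (hDF x).differentiableAt
  have hFcont : Continuous F := hFdiff.continuous
  set U := {y : ℝ | F y < E} with hUdef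
  have hUopen : IsOpen U := isOpen_lt hFcont continuous_const
  have hFanti : AntitoneOn F (Set.Ici φstar) := (aux_F_strictAntiOn hDF hfa hstar).antitoneOn
  have hpqU : Set.Icc p q ⊆ U := by
    intro y hy
    have h1 : F y ≤ F p := hFanti (Set.mem_Ici.mpr hp.le) (Set.mem_Ici.mpr (hp.le.trans hy.1)) hy.1
    show F y < E
    rw [hFp] at h1
    linarith
  set gE := fun y => (Real.sqrt (2*(E - F y)))⁻¹ with hgEdef
  have hgEcont : ContinuousOn gE U := by
    intro y hy
    have hpos : (0:ℝ) < E - F y := sub_pos.mpr hy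
    have h1 : ContinuousAt (fun w => Real.sqrt (2*(E - F w))) y :=
      (Real.continuous_sqrt.comp (continuous_const.mul (continuous_const.sub hFcont))).continuousAt
    have h2 : Real.sqrt (2*(E - F y)) ≠ 0 := by positivity
    exact (h1.inv₀ h2).continuousWithinAt
  have hInt : ∀ t ∈ Set.Icc p q, IntervalIntegrable gE volume p t := by
    intro t ht
    apply ContinuousOn.intervalIntegrable
    apply hgEcont.mono
    rw [Set.uIcc_of_le ht.1]
    exact (Set.Icc_subset_Icc_right ht.2).trans hpqU
  have hCder : ∀ t ∈ Set.Icc p q, HasDerivAt (fun w => ∫ y in p..w, gE y) (gE t) t := by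
    intro t ht
    exact intervalIntegral.integral_hasDerivAt_right (hInt t ht)
      (hgEcont.stronglyMeasurableAtFilter hUopen t (hpqU ht))
      (hgEcont.continuousAt (hUopen.mem_nhds (hpqU ht)))
  have hφJanti : AntitoneOn φ (Set.Icc A xδ) := by
    apply antitoneOn_of_deriv_nonpos (convex_Icc A xδ) (hφc.mono hJsub)
    · intro x hx
      rw [interior_Icc] at hx
      have hxI : x ∈ Set.Ioo A B := ⟨hx.1, lt_of_lt_of_le hx.2 hxδI.2⟩
      exact ((hφ x (Set.Ioo_subset_Icc_self hxI)).hasDerivAt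
        (Icc_mem_nhds hxI.1 hxI.2)).differentiableAt.differentiableWithinAt
    · intro x hx
      rw [interior_Icc] at hx
      have hxI : x ∈ Set.Ioo A B := ⟨hx.1, lt_of_lt_of_le hx.2 hxδI.2⟩
      rw [((hφ x (Set.Ioo_subset_Icc_self hxI)).hasDerivAt (Icc_mem_nhds hxI.1 hxI.2)).deriv]
      have := hJu x (Set.Ioo_subset_Icc_self hx)
      linarith
  have hφmem : ∀ x ∈ Set.Icc A xδ, φ x ∈ Set.Icc p q :=
    fun x hx => ⟨hφJanti hx ⟨hAxδ, le_refl _⟩ hx.2, hφJanti ⟨le_refl _, hAxδ⟩ hx hx.1⟩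
  have hΨ : ∀ x ∈ Set.Icc A xδ,
      HasDerivWithinAt (fun x => (∫ y in p..(φ x), gE y) + x) 0 (Set.Icc A xδ) x := by
    intro x hx
    have h1 := (hCder (φ x) (hφmem x hx)).comp_hasDerivWithinAt x ((hφ x (hJsub hx)).mono hJsub)
    have h2 := h1.add (hasDerivWithinAt_id x (Set.Icc A xδ))
    have hxu : u x ≤ -σ/2 := hJu x hx
    have hsq : Real.sqrt (2*(E - F (φ x))) = -u x := by
      have he := henergy x (hJsub hx)
      have h4 : (-u x)^2 = u x^2 := by ring
      have h3 : 2*(E - F (φ x)) = (-u x)^2 := by rw [h4]; linarith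
      rw [h3, Real.sqrt_sq (by linarith : (0:ℝ) ≤ -u x)]
    have hval : gE (φ x) * u x + 1 = 0 := by
      simp only [hgEdef]
      rw [hsq]
      have hune : u x ≠ 0 := by intro h0; rw [h0] at hxu; linarith
      field_simp
      ring
    have h3 : HasDerivWithinAt (fun x => (∫ y in p..(φ x), gE y) + x)
        (gE (φ x) * u x + 1) (Set.Icc A xδ) x := h2
    rw [hval] at h3
    exact h3
  have hconst := constant_of_has_deriv_right_zero
    (fun x hx => (hΨ x hx).continuousWithinAt)
    (fun x hx => (hΨ x (Set.Ico_subset_Icc_self hx)).mono_of_mem_nhdsWithin (Icc_mem_nhdsGE_of_mem hx))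
  have hkey := hconst xδ ⟨hAxδ, le_refl _⟩
  rw [← hpdef, ← hqdef, intervalIntegral.integral_same] at hkey
  refine ⟨E, p, q, hp, hq, hpq, hFp, hFq, hEle, hlarge, ?_⟩
  show d = ∫ y in p..q, gE y
  simp only [hxδdef] at hkey
  linarith [hkey]


end aux2
theorem stmt16 {N : ℕ} (hN : 1 ≤ N) (z c : Fin N → ℝ)
    (hz : ∀ j, z j ≠ 0) (hc : ∀ j, 0 < c j) (q0 : ℝ)
    (f F : ℝ → ℝ)
    (hf : ∀ φ : ℝ, f φ = q0 + ∑ j, z j * c j * Real.exp (-(z j) * φ))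
    (hF : ∀ φ : ℝ, F φ = q0 * φ - ∑ j, c j * Real.exp (-(z j) * φ))
    (hcase : (∃ i j, z i * z j < 0) ∨ ((∀ j, z j < 0) ∧ 0 < q0))
    (φstar : ℝ) (hstar : f φstar = 0)
    (σ : ℝ) (hσ : 0 < σ)
    (a b : ℝ) (ha : φstar < a) (hb : φstar < b)
    (hFa : F a = F φstar - σ ^ 2 / 8) (hFb : F b = F φstar - σ ^ 2 / 2)
    (φf uf : ℝ → ℝ → ℝ)
    (hsol : ∀ L : ℝ, 0 < L →
      IsPBSol f (-(L / 2)) (L / 2) (φf L) (uf L) ∧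
      uf L (-(L / 2)) = -σ ∧ uf L (L / 2) = σ)
    (δ : ℝ → ℝ)
    (hδ : ∀ L : ℝ, 0 < L →
      δ L ∈ Set.Ioo 0 L ∧ uf L (-(L / 2) + δ L) = -σ / 2) :
    IntervalIntegrable (fun φ => 1 / Real.sqrt (F φstar - F φ)) volume a b ∧
    Tendsto δ atTop
      (𝓝 ((1 / Real.sqrt 2) * ∫ φ in a..b, 1 / Real.sqrt (F φstar - F φ))) := by
  have hDF : ∀ x, HasDerivAt F (f x) x := aux_hasDerivAt_F hf hF
  have hf'c : Continuous (fun x => -∑ j : Fin N, z j^2*c j*Real.exp (-(z j)*x)) := by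
    apply Continuous.neg
    apply continuous_finset_sum
    intro j _
    exact continuous_const.mul (Real.continuous_exp.comp (continuous_const.mul continuous_id))
  have hDf : ∀ x, HasDerivAt f ((fun x => -∑ j : Fin N, z j^2*c j*Real.exp (-(z j)*x)) x) x :=
    fun x => aux_hasDerivAt_f hf x
  have hfa : StrictAnti f := aux_f_strictAnti hN hz hc hf
  have hFanti : StrictAntiOn F (Set.Ici φstar) := aux_F_strictAntiOn hDF hfa hstar
  have hFcont : Continuous F := by
    have hFdiff : Differentiable ℝ F := fun x => (hDF x).differentiableAt
    exact hFdiff.continuous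
  have hσ2 : 0 < σ^2 := by positivity
  have hab : a ≤ b := aux_F_anti_rev hDF hfa hstar hb.le ha.le (by rw [hFa, hFb]; linarith only [hσ2])
  have hab' : a < b := by
    rcases eq_or_lt_of_le hab with h | h
    · exfalso
      rw [h] at hFa
      have := hFa.symm.trans hFb
      linarith only [this, hσ2]
    · exact h
  have hFya : ∀ y, a ≤ y → F y ≤ F a := fun y hy =>
    (hFanti.antitoneOn) (Set.mem_Ici.mpr ha.le) (Set.mem_Ici.mpr (ha.le.trans hy)) hy
  -- Part 1 : integrability
  have hcont1 : ContinuousOn (fun y => 1 / Real.sqrt (F φstar - F y)) (Set.Icc a b) := by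
    intro y hy
    have h1 := hFya y hy.1
    rw [hFa] at h1
    have h2 : 0 < F φstar - F y := by linarith only [h1, hσ2]
    have hc2 : ContinuousAt (fun w => Real.sqrt (F φstar - F w)) y :=
      (Real.continuous_sqrt.comp (continuous_const.sub hFcont)).continuousAt
    have h3 : Real.sqrt (F φstar - F y) ≠ 0 := by positivity
    exact (continuousAt_const.div hc2 h3).continuousWithinAt
  have hint1 : IntervalIntegrable (fun y => 1 / Real.sqrt (F φstar - F y)) volume a b := by
    apply ContinuousOn.intervalIntegrable
    rwa [Set.uIcc_of_le hab]
  refine ⟨hint1, ?_⟩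
  -- Part 2 : the limit
  have hTpt : (1 / Real.sqrt 2) * (∫ y in a..b, 1 / Real.sqrt (F φstar - F y))
      = ∫ y in a..b, (Real.sqrt (2*(F φstar - F y)))⁻¹ := by
    rw [← intervalIntegral.integral_const_mul]
    apply intervalIntegral.integral_congr
    intro y _
    show 1 / Real.sqrt 2 * (1 / Real.sqrt (F φstar - F y))
        = (Real.sqrt (2*(F φstar - F y)))⁻¹
    rw [Real.sqrt_mul (by norm_num : (0:ℝ) ≤ 2), mul_inv, one_div, one_div]
  rw [hTpt]
  rw [Metric.tendsto_atTop]
  intro ε hε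
  obtain ⟨M, hMdef⟩ : ∃ x : ℝ, x = (Real.sqrt (σ^2/8))⁻¹ := ⟨_, rfl⟩
  have hM : 0 < M := by
    rw [hMdef]
    exact inv_pos.mpr (Real.sqrt_pos.mpr (by linarith only [hσ2]))
  obtain ⟨D, hDdef⟩ : ∃ x : ℝ, x = 2*(σ^2/16)*Real.sqrt (2*(σ^2/16)) := ⟨_, rfl⟩
  have hm16 : 0 < σ^2/16 := by linarith only [hσ2]
  have hD : 0 < D := by
    rw [hDdef]
    exact mul_pos (by linarith only [hσ2]) (Real.sqrt_pos.mpr (by linarith only [hσ2]))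
  obtain ⟨ε2, hε2def⟩ : ∃ x : ℝ, x = min (b-a) (ε/(4*M+4)) := ⟨_, rfl⟩
  have hε2 : 0 < ε2 := by
    rw [hε2def]
    exact lt_min (by linarith only [hab']) (div_pos hε (by linarith only [hM]))
  have hε2a : ε2 ≤ b - a := hε2def ▸ min_le_left _ _
  have hε2b : ε2 ≤ ε/(4*M+4) := hε2def ▸ min_le_right _ _
  have hFaa : F (a+ε2) < F a :=
    hFanti (Set.mem_Ici.mpr ha.le) (Set.mem_Ici.mpr (by linarith only [ha, hε2])) (by linarith only [hε2])
  have hFbb : F (b+ε2) < F b :=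
    hFanti (Set.mem_Ici.mpr hb.le) (Set.mem_Ici.mpr (by linarith only [hb, hε2])) (by linarith only [hε2])
  have hXpos : (0:ℝ) < 4*(b-a)+4 := by linarith only [hab']
  obtain ⟨ε1, hε1def⟩ : ∃ x : ℝ,
      x = min (σ^2/16) (min (F a - F (a+ε2)) (min (F b - F (b+ε2)) (ε*D/(4*(b-a)+4)))) := ⟨_, rfl⟩
  have hε1 : 0 < ε1 := by
    rw [hε1def]
    exact lt_min hm16 (lt_min (by linarith only [hFaa]) (lt_min (by linarith only [hFbb])
      (div_pos (mul_pos hε hD) hXpos)))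
  have hε1a : ε1 ≤ σ^2/16 := hε1def ▸ min_le_left _ _
  have hε1b : ε1 ≤ F a - F (a+ε2) := hε1def ▸ le_trans (min_le_right _ _) (min_le_left _ _)
  have hε1c : ε1 ≤ F b - F (b+ε2) :=
    hε1def ▸ le_trans (min_le_right _ _) (le_trans (min_le_right _ _) (min_le_left _ _))
  have hε1d : ε1 ≤ ε*D/(4*(b-a)+4) :=
    hε1def ▸ le_trans (min_le_right _ _) (le_trans (min_le_right _ _) (min_le_right _ _))
  -- choose y0 close to φstar
  have hev1 : ∀ᶠ y in 𝓝[>] φstar, F φstar - ε1 < F y := by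
    have ht : Filter.Tendsto F (𝓝 φstar) (𝓝 (F φstar)) := hFcont.continuousAt
    have h1 : ∀ᶠ y in 𝓝 φstar, F y ∈ Set.Ioi (F φstar - ε1) :=
      ht.eventually_mem (Ioi_mem_nhds (by linarith only [hε1]))
    exact eventually_nhdsWithin_of_eventually_nhds (h1.mono (fun y hy => hy))
  have hev2 : ∀ᶠ y in 𝓝[>] φstar, y < a :=
    eventually_nhdsWithin_of_eventually_nhds
      ((isOpen_Iio.eventually_mem (Set.mem_Iio.mpr ha)).mono (fun y hy => hy))
  have hev3 : ∀ᶠ y in 𝓝[>] φstar, φstar < y := eventually_mem_nhdsWithin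
  obtain ⟨y0, hy01, hy02, hy03⟩ := (hev1.and (hev2.and hev3)).exists
  have hfy0 : 0 < -(f y0) := by
    have := hfa hy03
    rw [hstar] at this
    linarith only [this]
  refine ⟨max 1 (2*σ/(-(f y0)) + 1), ?_⟩
  intro L hL0
  have hL1 : (1:ℝ) ≤ L := le_trans (le_max_left _ _) hL0
  have hLpos : 0 < L := by linarith only [hL1]
  obtain ⟨hpb, hud⟩ := hδ L hLpos
  obtain ⟨hsolL, hua, hub⟩ := hsol L hLpos
  obtain ⟨E, p, q, hp, hq, hpq, hFp, hFq, hEle, hlarge, hdint⟩ :=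
    aux_perL hDF hDf hf'c hfa hstar hσ hLpos hsolL hua hub hpb hud
  have hEgt : F y0 < E := by
    by_contra hcon
    push_neg at hcon
    have h1 := hlarge y0 hy03 hcon
    have hL2 : 2*σ/(-(f y0)) + 1 ≤ L := le_trans (le_max_right _ _) hL0
    have h2 : (2*σ/(-(f y0)))*(-(f y0)) = 2*σ := div_mul_cancel₀ _ (ne_of_gt hfy0)
    linarith only [mul_le_mul_of_nonneg_right hL2 hfy0.le, h1, h2, hfy0]
  have hE1 : F φstar - ε1 < E := by linarith only [hEgt, hy01]
  -- localization of p and q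
  have hap : a ≤ p := aux_F_anti_rev hDF hfa hstar hp.le ha.le (by rw [hFp, hFa]; linarith only [hEle])
  have hbq : b ≤ q := aux_F_anti_rev hDF hfa hstar hq.le hb.le (by rw [hFq, hFb]; linarith only [hEle])
  have haq : a ≤ q := le_trans hab hbq
  have hpa2 : p < a + ε2 := by
    by_contra hcon
    push_neg at hcon
    have h1 : F p ≤ F (a+ε2) :=
      hFanti.antitoneOn (Set.mem_Ici.mpr (by linarith only [ha, hε2])) (Set.mem_Ici.mpr hp.le) hcon
    rw [hFp] at h1
    linarith only [h1, hE1, hε1b, hFa]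
  have hqb2 : q < b + ε2 := by
    by_contra hcon
    push_neg at hcon
    have h1 : F q ≤ F (b+ε2) :=
      hFanti.antitoneOn (Set.mem_Ici.mpr (by linarith only [hb, hε2])) (Set.mem_Ici.mpr hq.le) hcon
    rw [hFq] at h1
    linarith only [h1, hE1, hε1c, hFb]
  -- lower bound for E - F on [a,q]
  have hml : ∀ y ∈ Set.Icc a q, σ^2/16 ≤ E - F y := by
    intro y hy
    have h1 := hFya y hy.1
    rw [hFa] at h1
    linarith only [h1, hE1, hε1a]
  -- continuity / integrability
  have hgEcont : ContinuousOn (fun y => (Real.sqrt (2*(E - F y)))⁻¹) (Set.Icc a q) := by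
    intro y hy
    have h1 := hml y hy
    have h2 : (0:ℝ) < 2*(E - F y) := by linarith only [h1, hσ2]
    have hc2 : ContinuousAt (fun w => Real.sqrt (2*(E - F w))) y :=
      (Real.continuous_sqrt.comp (continuous_const.mul (continuous_const.sub hFcont))).continuousAt
    exact (hc2.inv₀ (by positivity)).continuousWithinAt
  have hgFecont : ContinuousOn (fun y => (Real.sqrt (2*(F φstar - F y)))⁻¹) (Set.Icc a b) := by
    intro y hy
    have h1 := hFya y hy.1
    rw [hFa] at h1
    have h2 : (0:ℝ) < 2*(F φstar - F y) := by linarith only [h1, hσ2]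
    have hc2 : ContinuousAt (fun w => Real.sqrt (2*(F φstar - F w))) y :=
      (Real.continuous_sqrt.comp (continuous_const.mul (continuous_const.sub hFcont))).continuousAt
    exact (hc2.inv₀ (by positivity)).continuousWithinAt
  have hIab : IntervalIntegrable (fun y => (Real.sqrt (2*(E - F y)))⁻¹) volume a b := by
    apply ContinuousOn.intervalIntegrable
    apply hgEcont.mono
    rw [Set.uIcc_of_le hab]
    exact Set.Icc_subset_Icc_right hbq
  have hIap : IntervalIntegrable (fun y => (Real.sqrt (2*(E - F y)))⁻¹) volume a p := by
    apply ContinuousOn.intervalIntegrable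
    apply hgEcont.mono
    rw [Set.uIcc_of_le hap]
    exact Set.Icc_subset_Icc_right (le_trans hpq (le_refl q))
  have hIbq : IntervalIntegrable (fun y => (Real.sqrt (2*(E - F y)))⁻¹) volume b q := by
    apply ContinuousOn.intervalIntegrable
    apply hgEcont.mono
    rw [Set.uIcc_of_le hbq]
    exact Set.Icc_subset_Icc hab (le_refl q)
  have hIpq : IntervalIntegrable (fun y => (Real.sqrt (2*(E - F y)))⁻¹) volume p q := by
    apply ContinuousOn.intervalIntegrable
    apply hgEcont.mono
    rw [Set.uIcc_of_le hpq]
    exact Set.Icc_subset_Icc hap (le_refl q)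
  have hIFeab : IntervalIntegrable (fun y => (Real.sqrt (2*(F φstar - F y)))⁻¹) volume a b := by
    apply ContinuousOn.intervalIntegrable
    rwa [Set.uIcc_of_le hab]
  have hsplit1 := intervalIntegral.integral_add_adjacent_intervals hIap hIpq
  have hsplit2 := intervalIntegral.integral_add_adjacent_intervals hIab hIbq
  -- pointwise bound by M
  have hbM : ∀ y ∈ Set.Icc a q, (Real.sqrt (2*(E - F y)))⁻¹ ≤ M := by
    intro y hy
    have h1 := hml y hy
    have h2 : Real.sqrt (σ^2/8) ≤ Real.sqrt (2*(E - F y)) := Real.sqrt_le_sqrt (by linarith only [h1])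
    have h3 : 0 < Real.sqrt (σ^2/8) := Real.sqrt_pos.mpr (by linarith only [hσ2])
    rw [hMdef]
    exact inv_anti₀ h3 h2
  have hnn : ∀ y : ℝ, 0 ≤ (Real.sqrt (2*(E - F y)))⁻¹ :=
    fun y => inv_nonneg.mpr (Real.sqrt_nonneg _)
  have hIbq_nn : 0 ≤ ∫ y in b..q, (Real.sqrt (2*(E - F y)))⁻¹ :=
    intervalIntegral.integral_nonneg hbq (fun y _ => hnn y)
  have hIap_nn : 0 ≤ ∫ y in a..p, (Real.sqrt (2*(E - F y)))⁻¹ :=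
    intervalIntegral.integral_nonneg hap (fun y _ => hnn y)
  have hIbq_le : (∫ y in b..q, (Real.sqrt (2*(E - F y)))⁻¹) ≤ M*(q-b) := by
    have h1 := intervalIntegral.integral_mono_on hbq hIbq (intervalIntegrable_const (c := M))
      (fun y hy => hbM y ⟨le_trans hab hy.1, hy.2⟩)
    rw [intervalIntegral.integral_const, smul_eq_mul] at h1
    linarith only [h1]
  have hIap_le : (∫ y in a..p, (Real.sqrt (2*(E - F y)))⁻¹) ≤ M*(p-a) := by
    have h1 := intervalIntegral.integral_mono_on hap hIap (intervalIntegrable_const (c := M))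
      (fun y hy => hbM y ⟨hy.1, le_trans hy.2 hpq⟩)
    rw [intervalIntegral.integral_const, smul_eq_mul] at h1
    linarith only [h1]
  -- central estimate
  have hcent : |(∫ y in a..b, (Real.sqrt (2*(E - F y)))⁻¹)
      - ∫ y in a..b, (Real.sqrt (2*(F φstar - F y)))⁻¹| ≤ (ε1/D) * |b - a| := by
    rw [← intervalIntegral.integral_sub hIab hIFeab]
    have hpt : ∀ y ∈ Set.uIoc a b,
        ‖(Real.sqrt (2*(E - F y)))⁻¹ - (Real.sqrt (2*(F φstar - F y)))⁻¹‖ ≤ ε1/D := by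
      intro y hy
      rw [Set.uIoc_of_le hab] at hy
      have hy' : y ∈ Set.Icc a b := Set.Ioc_subset_Icc_self hy
      have h1 : σ^2/16 ≤ E - F y := hml y ⟨hy'.1, le_trans hy'.2 hbq⟩
      have h1f := hFya y hy'.1
      rw [hFa] at h1f
      have h2 : σ^2/16 ≤ F φstar - F y := by linarith only [h1f, hσ2]
      have h3 := aux_invsqrt_lip hm16 h1 h2
      have h4 : |(E - F y) - (F φstar - F y)| = F φstar - E := by
        rw [show (E - F y) - (F φstar - F y) = -(F φstar - E) by ring, abs_neg,
          abs_of_nonneg (by linarith only [hEle])]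
      rw [h4, ← hDdef] at h3
      rw [Real.norm_eq_abs]
      refine le_trans h3 ?_
      exact (div_le_div_iff_of_pos_right hD).mpr (by linarith only [hE1])
    have := intervalIntegral.norm_integral_le_of_norm_le_const hpt
    simpa [Real.norm_eq_abs] using this
  -- numeric estimates
  have hMe2 : M*ε2 < ε/4 := by
    have hden : (0:ℝ) < 4*M+4 := by linarith only [hM]
    have hs : ε/(4*M+4)*(4*M+4) = ε := div_mul_cancel₀ _ (ne_of_gt hden)
    linarith only [mul_le_mul_of_nonneg_left hε2b hM.le, hs, hε2, hε2b]
  have hcentnum : (ε1/D)*|b-a| < ε/4 := by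
    rw [abs_of_nonneg (by linarith only [hab'] : (0:ℝ) ≤ b - a)]
    rw [div_mul_eq_mul_div, div_lt_iff₀ hD]
    have hz : ε*D/(4*(b-a)+4)*(4*(b-a)+4) = ε*D := div_mul_cancel₀ _ (ne_of_gt hXpos)
    have hzpos : 0 < ε*D/(4*(b-a)+4) := div_pos (mul_pos hε hD) hXpos
    linarith only [hz, hzpos, mul_le_mul_of_nonneg_right hε1d (by linarith only [hab'] : (0:ℝ) ≤ b - a)]
  -- conclusion
  rw [Real.dist_eq, hdint]
  have hEq : (∫ y in p..q, (Real.sqrt (2*(E - F y)))⁻¹)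
      = (∫ y in a..b, (Real.sqrt (2*(E - F y)))⁻¹)
        + (∫ y in b..q, (Real.sqrt (2*(E - F y)))⁻¹)
        - (∫ y in a..p, (Real.sqrt (2*(E - F y)))⁻¹) := by
    linarith only [hsplit1, hsplit2]
  rw [hEq]
  have hYb : (∫ y in b..q, (Real.sqrt (2*(E - F y)))⁻¹) ≤ M*ε2 :=
    le_trans hIbq_le (mul_le_mul_of_nonneg_left (by linarith only [hqb2]) hM.le)
  have hZb : (∫ y in a..p, (Real.sqrt (2*(E - F y)))⁻¹) ≤ M*ε2 :=
    le_trans hIap_le (mul_le_mul_of_nonneg_left (by linarith only [hpa2]) hM.le)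
  have h1 : |((∫ y in a..b, (Real.sqrt (2*(E - F y)))⁻¹)
        + (∫ y in b..q, (Real.sqrt (2*(E - F y)))⁻¹)
        - (∫ y in a..p, (Real.sqrt (2*(E - F y)))⁻¹))
      - ∫ y in a..b, (Real.sqrt (2*(F φstar - F y)))⁻¹|
      ≤ |(∫ y in a..b, (Real.sqrt (2*(E - F y)))⁻¹)
          - ∫ y in a..b, (Real.sqrt (2*(F φstar - F y)))⁻¹|
        + |(∫ y in b..q, (Real.sqrt (2*(E - F y)))⁻¹)
          - (∫ y in a..p, (Real.sqrt (2*(E - F y)))⁻¹)| := by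
    have e : ((∫ y in a..b, (Real.sqrt (2*(E - F y)))⁻¹)
        + (∫ y in b..q, (Real.sqrt (2*(E - F y)))⁻¹)
        - (∫ y in a..p, (Real.sqrt (2*(E - F y)))⁻¹))
      - (∫ y in a..b, (Real.sqrt (2*(F φstar - F y)))⁻¹)
      = ((∫ y in a..b, (Real.sqrt (2*(E - F y)))⁻¹)
          - ∫ y in a..b, (Real.sqrt (2*(F φstar - F y)))⁻¹)
        + ((∫ y in b..q, (Real.sqrt (2*(E - F y)))⁻¹)
          - (∫ y in a..p, (Real.sqrt (2*(E - F y)))⁻¹)) := by ring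
    rw [e]
    exact abs_add_le _ _
  have h2 : |(∫ y in b..q, (Real.sqrt (2*(E - F y)))⁻¹)
      - (∫ y in a..p, (Real.sqrt (2*(E - F y)))⁻¹)| ≤ M*ε2 :=
    abs_le.mpr ⟨by linarith only [hIbq_nn, hIap_nn, hYb, hZb], by linarith only [hIbq_nn, hIap_nn, hYb, hZb]⟩
  calc _ ≤ _ := h1
    _ < ε := by linarith only [hcent, h2, hMe2, hcentnum, hε]
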